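/- For the complete graph K_n with n odd and n ≥ 9, mp(K_n) = 2n − 3. -/
import Mathlib
open SimpleGraph Finset
set_option linter.unusedSectionVars false
set_option maxHeartbeats 1000000

/-- An almost-perfect matching: a matching covering all vertices except exactly one. -/
def SimpleGraph.Subgraph.IsAlmostPerfectMatching {V : Type*} {G : SimpleGraph V}
    (M : G.Subgraph) : Prop :=
  M.IsMatching ∧ ∃ v : V, M.verts = {v}ᶜ

/-- `G` has a perfect matching or an almost-perfect matching. -/
def SimpleGraph.HasGoodMatching {V : Type*} (G : SimpleGraph V) : Prop :=
  (∃ M : G.Subgraph, M.IsPerfectMatching) ∨ (∃ M : G.Subgraph, M.IsAlmostPerfectMatching)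

/-- The matching preclusion number of `G`. -/
noncomputable def SimpleGraph.mp {V : Type*} [Fintype V] (G : SimpleGraph V) : ℕ :=
  sInf { k | ∃ F : Finset (Sym2 V), ↑F ⊆ G.edgeSet ∧ F.card = k ∧
    ¬ (G.deleteEdges ↑F).HasGoodMatching }
variable {V : Type*} [Fintype V] {G : SimpleGraph V}

lemma matching_induce {M : G.Subgraph} (hM : M.IsMatching) (s : Set V)
    (hsub : s ⊆ M.verts) (hcl : ∀ v ∈ s, ∀ w, M.Adj v w → w ∈ s) :
    (M.induce s).IsMatching := by
  intro v hv
  simp only [SimpleGraph.Subgraph.induce_verts] at hv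
  obtain ⟨w, hw, hu⟩ := hM (hsub hv)
  exact ⟨w, ⟨hv, hcl v hv w hw, hw⟩, fun y hy => hu y hy.2.2⟩

lemma card_up {M M' : G.Subgraph} {w w' : V} (hw : w ∉ M.verts) (hw' : w' ∉ M.verts)
    (hne : w ≠ w') (hver : M'.verts = M.verts ∪ {w, w'}) :
    M'.verts.ncard = M.verts.ncard + 2 := by
  have h1 : M'.verts = insert w (insert w' M.verts) := by
    rw [hver]; ext x; simp [Set.mem_insert_iff]
  rw [h1, Set.ncard_insert_of_notMem (by simp [hw, hne]) (Set.Finite.insert _ (Set.toFinite _)),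
    Set.ncard_insert_of_notMem hw' (Set.toFinite _)]

lemma support_sup' (A B : G.Subgraph) : (A ⊔ B).support = A.support ∪ B.support := by
  ext x
  simp only [Subgraph.mem_support, Subgraph.sup_adj, Set.mem_union]
  constructor
  · rintro ⟨y, h | h⟩
    · exact Or.inl ⟨y, h⟩
    · exact Or.inr ⟨y, h⟩
  · rintro (⟨y, h⟩ | ⟨y, h⟩) <;> exact ⟨y, by tauto⟩

lemma augment1 {M : G.Subgraph} (hM : M.IsMatching)
    (hmax : ∀ M' : G.Subgraph, M'.IsMatching → M'.verts.ncard ≤ M.verts.ncard)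
    {w w' : V} (hw : w ∉ M.verts) (hw' : w' ∉ M.verts) (hadj : G.Adj w w') : False := by
  set M' := M ⊔ G.subgraphOfAdj hadj with hM'
  have hm' : M'.IsMatching := by
    refine hM.sup (Subgraph.IsMatching.subgraphOfAdj hadj) ?_
    rw [hM.support_eq_verts, support_subgraphOfAdj, Set.disjoint_right]
    rintro x (rfl | rfl) <;> simp_all
  have hver : M'.verts = M.verts ∪ {w, w'} := by
    rw [hM', Subgraph.verts_sup, subgraphOfAdj_verts]
  have := card_up hw hw' hadj.ne hver
  have := hmax M' hm'
  omega

lemma augment3 {M : G.Subgraph} (hM : M.IsMatching)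
    (hmax : ∀ M' : G.Subgraph, M'.IsMatching → M'.verts.ncard ≤ M.verts.ncard)
    {v pv w w' : V} (hvm : M.Adj v pv) (hw : w ∉ M.verts) (hw' : w' ∉ M.verts)
    (hne : w ≠ w') (h1 : G.Adj w v) (h2 : G.Adj pv w') : False := by
  have hv0 : v ∈ M.verts := M.edge_vert hvm
  have hpv0 : pv ∈ M.verts := M.edge_vert hvm.symm
  have hvpv : v ≠ pv := (M.adj_sub hvm).ne
  set S : Set V := M.verts \ {v, pv} with hS
  have hcl : ∀ y ∈ S, ∀ z, M.Adj y z → z ∈ S := by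
    rintro y ⟨hy1, hy2⟩ z hz
    refine ⟨M.edge_vert hz.symm, ?_⟩
    simp only [Set.mem_insert_iff, Set.mem_singleton_iff] at hy2 ⊢
    rintro (rfl | rfl)
    · exact hy2 (Or.inr ((hM hv0).unique hz.symm hvm))
    · exact hy2 (Or.inl ((hM hpv0).unique hz.symm hvm.symm))
  have hm0 : (M.induce S).IsMatching := matching_induce hM S Set.diff_subset hcl
  set M' := M.induce S ⊔ G.subgraphOfAdj h1 ⊔ G.subgraphOfAdj h2 with hM'
  have hsupp0 : (M.induce S).support ⊆ S := (M.induce S).support_subset_verts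
  have hm1 : (M.induce S ⊔ G.subgraphOfAdj h1).IsMatching := by
    refine hm0.sup (Subgraph.IsMatching.subgraphOfAdj h1) ?_
    rw [support_subgraphOfAdj, Set.disjoint_right]
    rintro x (rfl | rfl) hx
    · exact hw (hsupp0 hx).1
    · exact (hsupp0 hx).2 (Or.inl rfl)
  have hm' : M'.IsMatching := by
    refine hm1.sup (Subgraph.IsMatching.subgraphOfAdj h2) ?_
    rw [support_subgraphOfAdj, Set.disjoint_right, support_sup', support_subgraphOfAdj]
    rintro x (rfl | rfl) hx
    · rcases hx with hx | hx
      · exact (hsupp0 hx).2 (Or.inr rfl)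
      · rcases hx with rfl | rfl
        · exact hw hpv0
        · exact hvpv rfl
    · rcases hx with hx | hx
      · exact hw' (hsupp0 hx).1
      · rcases hx with rfl | rfl
        · exact hne rfl
        · exact hw' hv0
  have hver : M'.verts = M.verts ∪ {w, w'} := by
    rw [hM', Subgraph.verts_sup, Subgraph.verts_sup, subgraphOfAdj_verts, subgraphOfAdj_verts,
      Subgraph.induce_verts]
    ext x
    simp only [Set.mem_union, Set.mem_diff, Set.mem_insert_iff, Set.mem_singleton_iff, hS]
    constructor
    · rintro ((⟨h, _⟩ | (rfl | rfl)) | (rfl | rfl)) <;> tauto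
    · rintro (h | (rfl | rfl)) <;> by_cases hxv : x = v <;> by_cases hxpv : x = pv <;> tauto
  have := card_up hw hw' hne hver
  have := hmax M' hm'
  omega

lemma augment5 {M : G.Subgraph} (hM : M.IsMatching)
    (hmax : ∀ M' : G.Subgraph, M'.IsMatching → M'.verts.ncard ≤ M.verts.ncard)
    {v pv v' pv' w w' : V} (hvm : M.Adj v pv) (hvm' : M.Adj v' pv')
    (d1 : v ≠ v') (d2 : v ≠ pv') (d3 : pv ≠ v') (d4 : pv ≠ pv')
    (hw : w ∉ M.verts) (hw' : w' ∉ M.verts) (hne : w ≠ w')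
    (h1 : G.Adj w v) (h2 : G.Adj pv pv') (h3 : G.Adj v' w') : False := by
  have hv0 : v ∈ M.verts := M.edge_vert hvm
  have hpv0 : pv ∈ M.verts := M.edge_vert hvm.symm
  have hv0' : v' ∈ M.verts := M.edge_vert hvm'
  have hpv0' : pv' ∈ M.verts := M.edge_vert hvm'.symm
  have hvpv : v ≠ pv := (M.adj_sub hvm).ne
  have hvpv' : v' ≠ pv' := (M.adj_sub hvm').ne
  set S : Set V := M.verts \ {v, pv, v', pv'} with hS
  have hcl : ∀ y ∈ S, ∀ z, M.Adj y z → z ∈ S := by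
    rintro y ⟨hy1, hy2⟩ z hz
    refine ⟨M.edge_vert hz.symm, ?_⟩
    simp only [Set.mem_insert_iff, Set.mem_singleton_iff] at hy2 ⊢
    push_neg at hy2 ⊢
    obtain ⟨n1, n2, n3, n4⟩ := hy2
    refine ⟨?_, ?_, ?_, ?_⟩ <;> rintro rfl
    · exact n2 ((hM hv0).unique hz.symm hvm)
    · exact n1 ((hM hpv0).unique hz.symm hvm.symm)
    · exact n4 ((hM hv0').unique hz.symm hvm')
    · exact n3 ((hM hpv0').unique hz.symm hvm'.symm)
  have hm0 : (M.induce S).IsMatching := matching_induce hM S Set.diff_subset hcl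
  have hsupp0 : (M.induce S).support ⊆ S := (M.induce S).support_subset_verts
  have hSnot : ∀ x ∈ S, x = v ∨ x = pv ∨ x = v' ∨ x = pv' → False := by
    rintro x ⟨_, hx2⟩ h; exact hx2 h
  set M' := M.induce S ⊔ G.subgraphOfAdj h1 ⊔ G.subgraphOfAdj h2 ⊔ G.subgraphOfAdj h3 with hM'
  have hm1 : (M.induce S ⊔ G.subgraphOfAdj h1).IsMatching := by
    refine hm0.sup (Subgraph.IsMatching.subgraphOfAdj h1) ?_
    rw [support_subgraphOfAdj, Set.disjoint_right]
    rintro x (rfl | rfl) hx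
    · exact hw (hsupp0 hx).1
    · exact hSnot _ (hsupp0 hx) (by tauto)
  have hm2 : (M.induce S ⊔ G.subgraphOfAdj h1 ⊔ G.subgraphOfAdj h2).IsMatching := by
    refine hm1.sup (Subgraph.IsMatching.subgraphOfAdj h2) ?_
    rw [support_subgraphOfAdj, Set.disjoint_right, support_sup', support_subgraphOfAdj]
    rintro x (rfl | rfl) hx
    · rcases hx with hx | hx
      · exact hSnot _ (hsupp0 hx) (by tauto)
      · rcases hx with rfl | rfl
        · exact hw hpv0
        · exact hvpv rfl
    · rcases hx with hx | hx
      · exact hSnot _ (hsupp0 hx) (by tauto)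
      · rcases hx with rfl | rfl
        · exact hw hpv0'
        · exact d2 rfl
  have hm' : M'.IsMatching := by
    refine hm2.sup (Subgraph.IsMatching.subgraphOfAdj h3) ?_
    rw [support_subgraphOfAdj, Set.disjoint_right, support_sup', support_sup',
      support_subgraphOfAdj, support_subgraphOfAdj]
    rintro x (rfl | rfl) hx
    · rcases hx with (hx | hx) | hx
      · exact hSnot _ (hsupp0 hx) (by tauto)
      · rcases hx with rfl | rfl
        · exact hw hv0'
        · exact d1 rfl.symm
      · rcases hx with rfl | rfl
        · exact d3 rfl.symm
        · exact hvpv' rfl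
    · rcases hx with (hx | hx) | hx
      · exact hw' (hsupp0 hx).1
      · rcases hx with rfl | rfl
        · exact hne rfl
        · exact hw' hv0
      · rcases hx with rfl | rfl
        · exact hw' hpv0
        · exact hw' hpv0'
  have hver : M'.verts = M.verts ∪ {w, w'} := by
    rw [hM', Subgraph.verts_sup, Subgraph.verts_sup, Subgraph.verts_sup, subgraphOfAdj_verts,
      subgraphOfAdj_verts, subgraphOfAdj_verts, Subgraph.induce_verts]
    ext x
    simp only [Set.mem_union, Set.mem_diff, Set.mem_insert_iff, Set.mem_singleton_iff, hS]
    constructor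
    · rintro (((⟨h, _⟩ | (rfl | rfl)) | (rfl | rfl)) | (rfl | rfl)) <;> tauto
    · rintro (h | (rfl | rfl)) <;> by_cases hxv : x = v <;> by_cases hxpv : x = pv <;>
        by_cases hxv' : x = v' <;> by_cases hxpv' : x = pv' <;> tauto
  have := card_up hw hw' hne hver
  have := hmax M' hm'
  omega

lemma exists_max_matching (G : SimpleGraph V) :
    ∃ M : G.Subgraph, M.IsMatching ∧
      ∀ M' : G.Subgraph, M'.IsMatching → M'.verts.ncard ≤ M.verts.ncard := by
  classical
  set s : Set ℕ := {k | ∃ M : G.Subgraph, M.IsMatching ∧ M.verts.ncard = k} with hs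
  have hne : s.Nonempty := ⟨0, ⊥, fun v hv => absurd hv (by simp), by simp⟩
  have hbdd : BddAbove s := by
    refine ⟨Fintype.card V, ?_⟩
    rintro k ⟨M, _, rfl⟩
    calc M.verts.ncard ≤ Set.univ.ncard := Set.ncard_le_ncard (Set.subset_univ _) (Set.toFinite _)
      _ = Fintype.card V := by rw [Set.ncard_univ, Nat.card_eq_fintype_card]
  obtain ⟨M, hM, hcard⟩ := Nat.sSup_mem hne hbdd
  exact ⟨M, hM, fun M' hM' => hcard ▸ le_csSup hbdd ⟨M', hM', rfl⟩⟩

lemma arith (u m β σ t Z S Y Fc n : ℕ) (h1 : t = β + σ) (h2 : t + β ≤ m) (h3 : 3 ≤ u)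
    (h4 : u + m = n) (h5 : 9 ≤ n) (hZ : Z ≤ u*β + σ) (hS : S + Z = u*m)
    (hY : β*t + σ*β ≤ Y + β) (hF : 2*Fc + 8 ≤ 4*n)
    (hdeg : u*(u-1) + 2*S + Y ≤ 2*Fc) : False := by
  obtain ⟨j, rfl⟩ : ∃ j, u = j + 3 := ⟨u - 3, by omega⟩
  have he : j + 3 - 1 = j + 2 := rfl
  rw [he] at hdeg
  subst h1 h4
  rcases Nat.lt_or_ge j 1 with hu | hu
  · interval_cases j <;> nlinarith [sq_nonneg (β + σ), sq_nonneg β]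
  · nlinarith [sq_nonneg (β + σ), sq_nonneg β, sq_nonneg j]


lemma main_near {n : ℕ} (hn : Odd n) (h9 : 9 ≤ n) (F : Finset (Sym2 (Fin n)))
    (hF : ↑F ⊆ (⊤ : SimpleGraph (Fin n)).edgeSet) (hcard : F.card ≤ 2 * n - 4) :
    ((⊤ : SimpleGraph (Fin n)).deleteEdges ↑F).HasGoodMatching := by
  classical
  set G := (⊤ : SimpleGraph (Fin n)).deleteEdges ↑F with hGdef
  obtain ⟨M, hM, hmax⟩ := exists_max_matching G
  have hGadj : ∀ a b : Fin n, G.Adj a b ↔ a ≠ b ∧ s(a,b) ∉ F := by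
    intro a b
    rw [hGdef, SimpleGraph.deleteEdges_adj]
    simp
  have hcompl : ∀ a b : Fin n, a ≠ b → ¬ G.Adj a b → s(a,b) ∈ F := by
    intro a b hab h
    by_contra hf
    exact h ((hGadj a b).mpr ⟨hab, hf⟩)
  set Uf : Finset (Fin n) := univ.filter (fun v => v ∉ M.verts) with hUf
  set Vf : Finset (Fin n) := univ.filter (fun v => v ∈ M.verts) with hVf
  have hUmem : ∀ {w : Fin n}, w ∈ Uf ↔ w ∉ M.verts := by intro w; simp [hUf]
  have hVmem : ∀ {v : Fin n}, v ∈ Vf ↔ v ∈ M.verts := by intro v; simp [hVf]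
  have hum : Vf.card + Uf.card = n := by
    rw [hVf, hUf]
    simpa using Finset.card_filter_add_card_filter_not
      (s := (univ : Finset (Fin n))) (p := fun v => v ∈ M.verts)
  by_cases hu0 : Uf.card = 0
  · left
    refine ⟨M, hM, fun v => ?_⟩
    by_contra hv
    have : v ∈ Uf := hUmem.mpr hv
    simp [Finset.card_eq_zero.mp hu0] at this
  by_cases hu1 : Uf.card = 1
  · right
    obtain ⟨v0, hv0⟩ := Finset.card_eq_one.mp hu1
    refine ⟨M, hM, v0, ?_⟩
    ext x
    constructor
    · intro hx
      simp only [Set.mem_compl_iff, Set.mem_singleton_iff]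
      rintro rfl
      have : x ∈ Uf := by rw [hv0]; exact Finset.mem_singleton_self x
      exact hUmem.mp this hx
    · intro hx
      simp only [Set.mem_compl_iff, Set.mem_singleton_iff] at hx
      by_contra hxx
      have : x ∈ Uf := hUmem.mpr hxx
      rw [hv0, Finset.mem_singleton] at this
      exact hx this
  exfalso
  -- evenness and u ≥ 3
  have hVtoF : M.verts.toFinset = Vf := by
    ext x; simp [hVf]
  have hmeven : Even Vf.card := by
    have := hM.even_card
    rwa [hVtoF] at this
  have hu3 : 3 ≤ Uf.card := by
    obtain ⟨a, ha⟩ := hn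
    obtain ⟨b, hb⟩ := hmeven
    omega
  -- partner function
  set p : Fin n → Fin n := fun v => if h : v ∈ M.verts then (hM h).choose else v with hp
  have hpadj : ∀ {v : Fin n}, v ∈ M.verts → M.Adj v (p v) := by
    intro v h
    rw [hp]
    simp only [dif_pos h]
    exact (hM h).choose_spec.1
  have hpuniq : ∀ {v w : Fin n}, v ∈ M.verts → M.Adj v w → w = p v := by
    intro v w h hw
    rw [hp]; simp only [dif_pos h]
    exact (hM h).choose_spec.2 w hw
  have hpmem : ∀ {v : Fin n}, v ∈ M.verts → p v ∈ M.verts := by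
    intro v h
    exact M.edge_vert (hpadj h).symm
  have hpp : ∀ {v : Fin n}, v ∈ M.verts → p (p v) = v := by
    intro v h
    exact ((hpuniq (hpmem h) (hpadj h).symm)).symm
  have hpne : ∀ {v : Fin n}, v ∈ M.verts → p v ≠ v := by
    intro v h
    exact (M.adj_sub (hpadj h)).ne'
  have hpinj : ∀ {a b : Fin n}, a ∈ M.verts → b ∈ M.verts → p a = p b → a = b := by
    intro a b ha hb hab
    have := hpp ha
    rw [hab, hpp hb] at this
    exact this.symm
  -- G-neighborhoods in U
  set NG : Fin n → Finset (Fin n) := fun v => Uf.filter (fun w => G.Adj v w) with hNG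
  set Big : Finset (Fin n) := Vf.filter (fun v => 2 ≤ (NG v).card) with hBig
  set Sml : Finset (Fin n) := Vf.filter (fun v => (NG v).card = 1) with hSml
  set T : Finset (Fin n) := Vf.filter (fun v => 1 ≤ (NG v).card) with hT
  -- C1 : U is a clique in F
  have hC1 : ∀ {w w' : Fin n}, w ∈ Uf → w' ∈ Uf → w ≠ w' → s(w, w') ∈ F := by
    intro w w' hw hw' hne
    refine hcompl w w' hne fun hadj => ?_
    exact augment1 hM hmax (hUmem.mp hw) (hUmem.mp hw') hadj
  -- C2 : partner of a Big vertex is untouched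
  have hC2 : ∀ {v : Fin n}, v ∈ Big → NG (p v) = ∅ := by
    intro v hv
    rw [hBig, Finset.mem_filter] at hv
    obtain ⟨hvV, hv2⟩ := hv
    by_contra hne
    obtain ⟨w', hw'⟩ := Finset.nonempty_iff_ne_empty.mpr hne
    rw [hNG, Finset.mem_filter] at hw'
    obtain ⟨hw'U, hw'adj⟩ := hw'
    obtain ⟨a, ha, b, hb, hab⟩ := Finset.one_lt_card.mp hv2
    rw [hNG, Finset.mem_filter] at ha hb
    have hexw : ∃ w, w ∈ Uf ∧ G.Adj v w ∧ w ≠ w' := by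
      by_cases haw : a = w'
      · exact ⟨b, hb.1, hb.2, by rw [← haw]; exact fun h => hab h.symm⟩
      · exact ⟨a, ha.1, ha.2, haw⟩
    obtain ⟨w, hwU, hwadj, hww'⟩ := hexw
    exact augment3 hM hmax (hpadj (hVmem.mp hvV)) (hUmem.mp hwU) (hUmem.mp hw'U)
      hww' hwadj.symm hw'adj
  -- the deletion graph H
  set H : SimpleGraph (Fin n) := SimpleGraph.fromEdgeSet (↑F : Set (Sym2 (Fin n))) with hH
  letI : DecidableRel H.Adj := fun a b => Classical.propDecidable _
  have hHadj : ∀ {a b : Fin n}, H.Adj a b ↔ (s(a,b) ∈ F ∧ a ≠ b) := by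
    intro a b; rw [hH, SimpleGraph.fromEdgeSet_adj]; simp
  have hHG : ∀ {a b : Fin n}, a ≠ b → ¬ G.Adj a b → H.Adj a b := by
    intro a b hne hng
    exact hHadj.mpr ⟨hcompl a b hne hng, hne⟩
  -- C3 : free endpoints of a Big edge and another touched edge are F-adjacent
  have hC3 : ∀ {v y : Fin n}, v ∈ Big → y ∈ T → y ≠ v → H.Adj (p v) (p y) := by
    intro v y hv hy hne
    have hvB := hv
    rw [hBig, Finset.mem_filter] at hv
    rw [hT, Finset.mem_filter] at hy
    obtain ⟨hvV, hv2⟩ := hv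
    obtain ⟨hyV, hy1⟩ := hy
    have hvM := hVmem.mp hvV
    have hyM := hVmem.mp hyV
    have hppne : p v ≠ p y := fun h => hne (hpinj hyM hvM h.symm)
    by_contra hnot
    have hGpp : G.Adj (p v) (p y) := by
      refine (hGadj _ _).mpr ⟨hppne, fun hmem => hnot (hHadj.mpr ⟨hmem, hppne⟩)⟩
    obtain ⟨w', hw'⟩ := Finset.card_pos.mp hy1
    rw [hNG, Finset.mem_filter] at hw'
    obtain ⟨a, ha, b, hb, hab⟩ := Finset.one_lt_card.mp hv2
    rw [hNG, Finset.mem_filter] at ha hb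
    have hexw : ∃ w, w ∈ Uf ∧ G.Adj v w ∧ w ≠ w' := by
      by_cases haw : a = w'
      · exact ⟨b, hb.1, hb.2, by rw [← haw]; exact fun h => hab h.symm⟩
      · exact ⟨a, ha.1, ha.2, haw⟩
    obtain ⟨w, hwU, hwadj, hww'⟩ := hexw
    have d2 : v ≠ p y := by
      rintro rfl
      have : NG y = ∅ := by
        have := hC2 hvB
        rwa [hpp hyM] at this
      rw [this] at hy1
      simp at hy1
    have d3 : p v ≠ y := by
      rintro h
      have : NG y = ∅ := by rw [← h]; exact hC2 hvB
      rw [this] at hy1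
      simp at hy1
    exact augment5 hM hmax (hpadj hvM) (hpadj hyM) (fun h => hne h.symm) d2 d3 hppne
      (hUmem.mp hwU) (hUmem.mp hw'.1) hww' hwadj.symm hGpp hw'.2
  -- counting
  have hSmlT : Sml ⊆ T := by
    intro x hx
    rw [hSml, Finset.mem_filter] at hx
    rw [hT, Finset.mem_filter]
    exact ⟨hx.1, by omega⟩
  have hBigT : Big ⊆ T := by
    intro x hx
    rw [hBig, Finset.mem_filter] at hx
    rw [hT, Finset.mem_filter]
    exact ⟨hx.1, by omega⟩
  have hTV : T ⊆ Vf := by rw [hT]; exact Finset.filter_subset _ _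
  have hdisjBS : Disjoint Big Sml := by
    rw [Finset.disjoint_left]
    intro a haB haS
    rw [hBig, Finset.mem_filter] at haB
    rw [hSml, Finset.mem_filter] at haS
    omega
  have htBS : Big ∪ Sml = T := by
    rw [hBig, hSml, hT, ← Finset.filter_or]
    apply Finset.filter_congr
    intro v _
    omega
  have htsum : T.card = Big.card + Sml.card := by
    rw [← htBS, Finset.card_union_of_disjoint hdisjBS]
  have hmemMof : ∀ {x : Fin n}, x ∈ T → x ∈ M.verts := fun hx => hVmem.mp (hTV hx)
  have hpInjOnT : Set.InjOn p ↑T := by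
    intro a ha b hb hab
    exact hpinj (hmemMof ha) (hmemMof hb) hab
  set FR : Finset (Fin n) := T.image p with hFR
  have hFRcard : FR.card = T.card := Finset.card_image_of_injOn hpInjOnT
  have hFRV : FR ⊆ Vf := by
    intro x hx
    rw [hFR, Finset.mem_image] at hx
    obtain ⟨y, hy, rfl⟩ := hx
    exact hVmem.mpr (hpmem (hmemMof hy))
  have hBigPnotT : ∀ {v : Fin n}, v ∈ Big → p v ∉ T := by
    intro v hv hmem
    rw [hT, Finset.mem_filter] at hmem
    have := hC2 hv
    rw [this] at hmem
    simp at hmem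
  have hmt : T.card + Big.card ≤ Vf.card := by
    have hsub : T ∪ Big.image p ⊆ Vf := by
      intro x hx
      rcases Finset.mem_union.mp hx with hx | hx
      · exact hTV hx
      · rw [Finset.mem_image] at hx
        obtain ⟨y, hy, rfl⟩ := hx
        exact hVmem.mpr (hpmem (hmemMof (hBigT hy)))
    have hdisj : Disjoint T (Big.image p) := by
      rw [Finset.disjoint_right]
      intro x hx
      rw [Finset.mem_image] at hx
      obtain ⟨y, hy, rfl⟩ := hx
      exact hBigPnotT hy
    have h1 := Finset.card_le_card hsub
    rw [Finset.card_union_of_disjoint hdisj,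
      Finset.card_image_of_injOn (Set.InjOn.mono (by exact_mod_cast hBigT) hpInjOnT)] at h1
    exact h1
  -- Z
  set Z := ∑ v ∈ Vf, (NG v).card with hZdef
  have hZ : Z ≤ Uf.card * Big.card + Sml.card := by
    have hzero : ∀ v ∈ Vf \ T, (NG v).card = 0 := by
      intro v hv
      rw [Finset.mem_sdiff] at hv
      obtain ⟨h1, h2⟩ := hv
      have h3 : ¬ 1 ≤ (NG v).card := fun hc => h2 (by rw [hT, Finset.mem_filter]; exact ⟨h1, hc⟩)
      omega
    have hsplit : Z = ∑ v ∈ T, (NG v).card := by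
      rw [hZdef, ← Finset.sum_sdiff hTV, Finset.sum_eq_zero hzero, zero_add]
    rw [hsplit, ← htBS, Finset.sum_union hdisjBS]
    have h1 : ∑ v ∈ Big, (NG v).card ≤ Uf.card * Big.card := by
      calc ∑ v ∈ Big, (NG v).card ≤ ∑ _v ∈ Big, Uf.card :=
            Finset.sum_le_sum fun v _ => Finset.card_le_card (by simp only [hNG]; exact Finset.filter_subset _ _)
        _ = Uf.card * Big.card := by rw [Finset.sum_const, smul_eq_mul, mul_comm]
    have h2 : ∑ v ∈ Sml, (NG v).card = Sml.card := by
      rw [Finset.sum_congr rfl fun v hv => (by rw [hSml, Finset.mem_filter] at hv; exact hv.2 :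
        (NG v).card = 1), Finset.sum_const, smul_eq_mul, mul_one]
    omega
  -- dHU and S
  set dHU : Fin n → ℕ := fun v => (Uf.filter (fun w => H.Adj v w)).card with hdHUdef
  have hdHU : ∀ v ∈ Vf, dHU v + (NG v).card = Uf.card := by
    intro v hv
    have hvM := hVmem.mp hv
    have hset : Uf.filter (fun w => H.Adj v w) = Uf \ NG v := by
      ext w
      simp only [Finset.mem_filter, Finset.mem_sdiff, hNG]
      constructor
      · rintro ⟨hwU, hadj⟩
        exact ⟨hwU, fun hc => ((hGadj v w).mp hc.2).2 (hHadj.mp hadj).1⟩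
      · rintro ⟨hwU, hnadj⟩
        have hvw : v ≠ w := fun h => (hUmem.mp hwU) (h ▸ hvM)
        refine ⟨hwU, hHG hvw fun hadj => hnadj ⟨hwU, hadj⟩⟩
    rw [hdHUdef]
    simp only []
    rw [hset, Finset.card_sdiff_of_subset (by simp only [hNG]; exact Finset.filter_subset _ _)]
    have := Finset.card_le_card (show NG v ⊆ Uf by simp only [hNG]; exact Finset.filter_subset _ _)
    omega
  set S := ∑ v ∈ Vf, dHU v with hSdef
  have hSZ : S + Z = Uf.card * Vf.card := by
    rw [hSdef, hZdef, ← Finset.sum_add_distrib]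
    calc ∑ v ∈ Vf, (dHU v + (NG v).card) = ∑ _v ∈ Vf, Uf.card := Finset.sum_congr rfl hdHU
      _ = Uf.card * Vf.card := by rw [Finset.sum_const, smul_eq_mul, mul_comm]
  -- double counting
  have hswap : ∑ w ∈ Uf, (Vf.filter (fun v => H.Adj w v)).card = S := by
    rw [hSdef]
    simp only [Finset.card_filter, hdHUdef]
    refine Finset.sum_comm.trans ?_
    exact Finset.sum_congr rfl fun v _ => Finset.sum_congr rfl fun w _ =>
      if_congr (SimpleGraph.adj_comm _ _ _) rfl rfl
  -- degree bounds on U side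
  have hdegU : ∀ w ∈ Uf, Uf.card - 1 + (Vf.filter (fun v => H.Adj w v)).card ≤ H.degree w := by
    intro w hw
    have hsub : Uf.erase w ∪ Vf.filter (fun v => H.Adj w v) ⊆ H.neighborFinset w := by
      intro x hx
      rw [SimpleGraph.mem_neighborFinset]
      rcases Finset.mem_union.mp hx with hx | hx
      · have hxU := Finset.mem_of_mem_erase hx
        have hxw : w ≠ x := (Finset.ne_of_mem_erase hx).symm
        exact hHadj.mpr ⟨hC1 hw hxU hxw, hxw⟩
      · exact (Finset.mem_filter.mp hx).2
    have hdisj : Disjoint (Uf.erase w) (Vf.filter (fun v => H.Adj w v)) := by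
      rw [Finset.disjoint_left]
      intro x hx1 hx2
      have h1 := hUmem.mp (Finset.mem_of_mem_erase hx1)
      exact h1 (hVmem.mp (Finset.mem_filter.mp hx2).1)
    have h := Finset.card_le_card hsub
    rw [Finset.card_union_of_disjoint hdisj, Finset.card_erase_of_mem hw] at h
    exact h
  have hsumU : Uf.card * (Uf.card - 1) + S ≤ ∑ w ∈ Uf, H.degree w := by
    calc Uf.card * (Uf.card - 1) + S
        = ∑ w ∈ Uf, (Uf.card - 1 + (Vf.filter (fun v => H.Adj w v)).card) := by
          rw [Finset.sum_add_distrib, Finset.sum_const, smul_eq_mul, hswap, mul_comm]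
      _ ≤ ∑ w ∈ Uf, H.degree w := Finset.sum_le_sum hdegU
  -- degree bounds on V side
  set Y := ∑ v ∈ FR, (FR.filter (fun z => H.Adj v z)).card with hYdef
  have hdegV : ∀ v ∈ Vf, dHU v + (FR.filter (fun z => H.Adj v z)).card ≤ H.degree v := by
    intro v hv
    have hsub : Uf.filter (fun w => H.Adj v w) ∪ FR.filter (fun z => H.Adj v z)
        ⊆ H.neighborFinset v := by
      intro x hx
      rw [SimpleGraph.mem_neighborFinset]
      rcases Finset.mem_union.mp hx with hx | hx
      · exact (Finset.mem_filter.mp hx).2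
      · exact (Finset.mem_filter.mp hx).2
    have hdisj : Disjoint (Uf.filter (fun w => H.Adj v w)) (FR.filter (fun z => H.Adj v z)) := by
      rw [Finset.disjoint_left]
      intro x hx1 hx2
      exact (hUmem.mp (Finset.mem_filter.mp hx1).1)
        (hVmem.mp (hFRV (Finset.mem_filter.mp hx2).1))
    have h := Finset.card_le_card hsub
    rw [Finset.card_union_of_disjoint hdisj] at h
    exact h
  have hsumV : S + Y ≤ ∑ v ∈ Vf, H.degree v := by
    have h1 : ∑ v ∈ Vf, (dHU v + (FR.filter (fun z => H.Adj v z)).card)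
        ≤ ∑ v ∈ Vf, H.degree v := Finset.sum_le_sum hdegV
    rw [Finset.sum_add_distrib] at h1
    have h2 : Y ≤ ∑ v ∈ Vf, (FR.filter (fun z => H.Adj v z)).card := by
      rw [hYdef]
      exact Finset.sum_le_sum_of_subset hFRV
    omega
  -- lower bound on Y
  have hYb : Big.card * T.card + Sml.card * Big.card ≤ Y + Big.card := by
    have hYT : Y = ∑ y ∈ T, (FR.filter (fun z => H.Adj (p y) z)).card := by
      rw [hYdef, hFR, Finset.sum_image (fun a ha b hb h => hpInjOnT ha hb h)]
    have hbig : ∀ y ∈ Big, T.card - 1 ≤ (FR.filter (fun z => H.Adj (p y) z)).card := by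
      intro y hy
      have hsub : (T.erase y).image p ⊆ FR.filter (fun z => H.Adj (p y) z) := by
        intro x hx
        rw [Finset.mem_image] at hx
        obtain ⟨z, hz, rfl⟩ := hx
        have hzT := Finset.mem_of_mem_erase hz
        refine Finset.mem_filter.mpr ⟨Finset.mem_image_of_mem p hzT, ?_⟩
        exact hC3 hy hzT (Finset.ne_of_mem_erase hz)
      have h := Finset.card_le_card hsub
      rw [Finset.card_image_of_injOn (Set.InjOn.mono (by
        intro x hx
        exact (Finset.mem_coe.mpr (Finset.mem_of_mem_erase (Finset.mem_coe.mp hx)))) hpInjOnT),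
        Finset.card_erase_of_mem (hBigT hy)] at h
      exact h
    have hsml : ∀ y ∈ Sml, Big.card ≤ (FR.filter (fun z => H.Adj (p y) z)).card := by
      intro y hy
      have hyT := hSmlT hy
      have hsub : Big.image p ⊆ FR.filter (fun z => H.Adj (p y) z) := by
        intro x hx
        rw [Finset.mem_image] at hx
        obtain ⟨z, hz, rfl⟩ := hx
        have hyz : y ≠ z := by
          intro h
          rw [hBig, Finset.mem_filter] at hz
          rw [hSml, Finset.mem_filter] at hy
          rw [h] at hy
          omega
        refine Finset.mem_filter.mpr ⟨Finset.mem_image_of_mem p (hBigT hz), ?_⟩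
        rw [SimpleGraph.adj_comm]
        exact hC3 hz hyT hyz
      have h := Finset.card_le_card hsub
      rw [Finset.card_image_of_injOn (Set.InjOn.mono (by exact_mod_cast hBigT) hpInjOnT)] at h
      exact h
    have hsplit : Y = ∑ y ∈ Big, (FR.filter (fun z => H.Adj (p y) z)).card
        + ∑ y ∈ Sml, (FR.filter (fun z => H.Adj (p y) z)).card := by
      rw [hYT, ← htBS, Finset.sum_union hdisjBS]
    have h1 : Big.card * (T.card - 1) ≤ ∑ y ∈ Big, (FR.filter (fun z => H.Adj (p y) z)).card := by
      calc Big.card * (T.card - 1) = ∑ _y ∈ Big, (T.card - 1) := by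
            rw [Finset.sum_const, smul_eq_mul, mul_comm]
        _ ≤ _ := Finset.sum_le_sum hbig
    have h2 : Sml.card * Big.card ≤ ∑ y ∈ Sml, (FR.filter (fun z => H.Adj (p y) z)).card := by
      calc Sml.card * Big.card = ∑ _y ∈ Sml, Big.card := by
            rw [Finset.sum_const, smul_eq_mul]
        _ ≤ _ := Finset.sum_le_sum hsml
    rcases Nat.eq_zero_or_pos Big.card with hB0 | hB1
    · rw [hB0]; omega
    · have hT1 : 1 ≤ T.card := by omega
      have h4 : T.card - 1 + 1 = T.card := Nat.succ_pred_eq_of_pos hT1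
      have : Big.card * (T.card - 1) + Big.card = Big.card * T.card := by
        calc Big.card * (T.card - 1) + Big.card = Big.card * (T.card - 1 + 1) := by ring
          _ = Big.card * T.card := by rw [h4]
      omega
  -- handshake
  have hcardgen : ∀ (inst : Fintype ↑H.edgeSet), (@SimpleGraph.edgeFinset _ H inst).card = F.card := by
    intro inst
    have hHedge : @SimpleGraph.edgeFinset _ H inst = F := by
      ext e
      rw [SimpleGraph.mem_edgeFinset, hH, SimpleGraph.edgeSet_fromEdgeSet, Set.mem_diff]
      constructor
      · rintro ⟨he, _⟩; exact he
      · intro he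
        refine ⟨he, ?_⟩
        have := hF he
        rw [SimpleGraph.edgeSet_top] at this
        exact this
    rw [hHedge]
  have hhs : ∑ v, H.degree v = 2 * F.card := by
    rw [SimpleGraph.sum_degrees_eq_twice_card_edges, hcardgen _]
  have hsplitdeg : ∑ v ∈ Vf, H.degree v + ∑ w ∈ Uf, H.degree w = ∑ v, H.degree v := by
    rw [hVf, hUf]
    exact Finset.sum_filter_add_sum_filter_not _ _ _
  -- final contradiction
  have hdeg : Uf.card * (Uf.card - 1) + 2 * S + Y ≤ 2 * F.card := by omega
  have hFc : 2 * F.card + 8 ≤ 4 * n := by omega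
  exact arith Uf.card Vf.card Big.card Sml.card T.card Z S Y F.card n htsum hmt hu3
    (by omega) h9 hZ hSZ hYb hFc hdeg

lemma upper {n : ℕ} (h9 : 9 ≤ n) :
    ∃ F : Finset (Sym2 (Fin n)), ↑F ⊆ (⊤ : SimpleGraph (Fin n)).edgeSet ∧ F.card = 2*n - 3 ∧
      ¬ ((⊤ : SimpleGraph (Fin n)).deleteEdges ↑F).HasGoodMatching := by
  classical
  set v0 : Fin n := ⟨0, by omega⟩ with hv0
  set v1 : Fin n := ⟨1, by omega⟩ with hv1
  have h01 : v0 ≠ v1 := by simp [hv0, hv1, Fin.ext_iff]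
  set A : Finset (Sym2 (Fin n)) := (univ.erase v0).image (fun x => s(v0, x)) with hA
  set B : Finset (Sym2 (Fin n)) := (univ.erase v1).image (fun x => s(v1, x)) with hB
  have hinj0 : Function.Injective (fun x : Fin n => s(v0, x)) := fun x y h => Sym2.congr_right.mp h
  have hinj1 : Function.Injective (fun x : Fin n => s(v1, x)) := fun x y h => Sym2.congr_right.mp h
  have hcardA : A.card = n - 1 := by
    rw [hA, Finset.card_image_of_injective _ hinj0, Finset.card_erase_of_mem (Finset.mem_univ _),
      Finset.card_univ, Fintype.card_fin]
  have hcardB : B.card = n - 1 := by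
    rw [hB, Finset.card_image_of_injective _ hinj1, Finset.card_erase_of_mem (Finset.mem_univ _),
      Finset.card_univ, Fintype.card_fin]
  have hinter : A ∩ B = {s(v0, v1)} := by
    ext e
    constructor
    · intro he
      rw [Finset.mem_inter, hA, hB] at he
      obtain ⟨heA, heB⟩ := he
      rw [Finset.mem_image] at heA heB
      obtain ⟨x, hx, rfl⟩ := heA
      obtain ⟨y, hy, hxy⟩ := heB
      rw [Finset.mem_singleton]
      rw [Sym2.eq_iff] at hxy
      rcases hxy with ⟨h1, _⟩ | ⟨h1, h2⟩
      · exact absurd h1.symm h01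
      · rw [← h1]
    · intro he
      rw [Finset.mem_singleton] at he
      subst he
      rw [Finset.mem_inter, hA, hB]
      constructor
      · exact Finset.mem_image.mpr ⟨v1, Finset.mem_erase.mpr ⟨h01.symm, Finset.mem_univ _⟩, rfl⟩
      · exact Finset.mem_image.mpr ⟨v0, Finset.mem_erase.mpr ⟨h01, Finset.mem_univ _⟩, Sym2.eq_swap⟩
  refine ⟨A ∪ B, ?_, ?_, ?_⟩
  · intro e he
    rw [Finset.mem_coe, Finset.mem_union] at he
    rcases he with he | he
    · rw [hA, Finset.mem_image] at he
      obtain ⟨x, hx, rfl⟩ := he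
      rw [SimpleGraph.mem_edgeSet, SimpleGraph.top_adj]
      exact fun h => (Finset.mem_erase.mp hx).1 h.symm
    · rw [hB, Finset.mem_image] at he
      obtain ⟨x, hx, rfl⟩ := he
      rw [SimpleGraph.mem_edgeSet, SimpleGraph.top_adj]
      exact fun h => (Finset.mem_erase.mp hx).1 h.symm
  · have := Finset.card_union_add_card_inter A B
    rw [hinter, Finset.card_singleton] at this
    omega
  · intro hgood
    have hnadj0 : ∀ w, ¬ ((⊤ : SimpleGraph (Fin n)).deleteEdges ↑(A ∪ B)).Adj v0 w := by
      intro w hadj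
      rw [SimpleGraph.deleteEdges_adj] at hadj
      refine hadj.2 ?_
      rw [Finset.mem_coe, Finset.mem_union]
      left
      rw [hA, Finset.mem_image]
      exact ⟨w, Finset.mem_erase.mpr ⟨fun h => hadj.1.ne h.symm, Finset.mem_univ _⟩, rfl⟩
    have hnadj1 : ∀ w, ¬ ((⊤ : SimpleGraph (Fin n)).deleteEdges ↑(A ∪ B)).Adj v1 w := by
      intro w hadj
      rw [SimpleGraph.deleteEdges_adj] at hadj
      refine hadj.2 ?_
      rw [Finset.mem_coe, Finset.mem_union]
      right
      rw [hB, Finset.mem_image]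
      exact ⟨w, Finset.mem_erase.mpr ⟨fun h => hadj.1.ne h.symm, Finset.mem_univ _⟩, rfl⟩
    rcases hgood with ⟨M, hMm, hMs⟩ | ⟨M, hMm, v, hMv⟩
    · obtain ⟨w, hw, _⟩ := hMm (hMs v0)
      exact hnadj0 w (M.adj_sub hw)
    · have : v0 ∈ M.verts ∨ v1 ∈ M.verts := by
        rw [hMv]
        by_cases h : v0 = v
        · right
          simp only [Set.mem_compl_iff, Set.mem_singleton_iff]
          rw [← h]
          exact fun hc => h01 hc.symm
        · left
          simp only [Set.mem_compl_iff, Set.mem_singleton_iff]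
          exact h
      rcases this with h | h
      · obtain ⟨w, hw, _⟩ := hMm h
        exact hnadj0 w (M.adj_sub hw)
      · obtain ⟨w, hw, _⟩ := hMm h
        exact hnadj1 w (M.adj_sub hw)

theorem stmt6 (n : ℕ) (hn : Odd n) (h9 : 9 ≤ n) :
    (⊤ : SimpleGraph (Fin n)).mp = 2 * n - 3 := by
  obtain ⟨F0, hF0sub, hF0card, hF0bad⟩ := upper h9
  rw [SimpleGraph.mp]
  have hmem : 2 * n - 3 ∈ { k | ∃ F : Finset (Sym2 (Fin n)),
      ↑F ⊆ (⊤ : SimpleGraph (Fin n)).edgeSet ∧ F.card = k ∧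
      ¬ ((⊤ : SimpleGraph (Fin n)).deleteEdges ↑F).HasGoodMatching } :=
    ⟨F0, hF0sub, hF0card, hF0bad⟩
  refine le_antisymm (Nat.sInf_le hmem) (le_csInf ⟨_, hmem⟩ ?_)
  rintro k ⟨F, hsub, hcard, hbad⟩
  by_contra hlt
  push_neg at hlt
  exact hbad (main_near hn h9 F hsub (by omega))
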